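/- Let A be a finitely generated abelian group, k a field, B a finite-index subgroup of A, and I, J ideals of kA. If the set of minimal primes over I equals the set of minimal primes over J in kA, then the set of minimal primes over I ∩ kB equals the set of minimal primes over J ∩ kB in kB. -/
import Mathlib

theorem stmt_9 {k : Type*} [Field k] {A : Type*} [CommGroup A] [Group.FG A]
    (B : Subgroup A) [B.FiniteIndex]
    (I J : Ideal (MonoidAlgebra k A))
    (h : I.minimalPrimes = J.minimalPrimes) :
    (I.comap (MonoidAlgebra.mapDomainRingHom k B.subtype)).minimalPrimes =
      (J.comap (MonoidAlgebra.mapDomainRingHom k B.subtype)).minimalPrimes := by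
  have hrad : I.radical = J.radical := by
    rw [← Ideal.sInf_minimalPrimes, ← Ideal.sInf_minimalPrimes, h]
  rw [← Ideal.radical_minimalPrimes, ← Ideal.comap_radical, hrad, Ideal.comap_radical,
    Ideal.radical_minimalPrimes]
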